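/- Fix θ ∈ [0, π/2] and set Y = σz and Y' = cos θ · σz + sin θ · σx. Let Λ be a finite type, let ξ : Λ → ℝ be nonnegative with ∑_λ ξ(λ) = 1, let a, a' : Λ → ℝ take values in [-1, 1], and let σ₁, σ₂ : Λ → (2×2 complex matrices) be two assignments of positive semidefinite trace-1 matrices. Define E₁ = ∑_λ ξ(λ) a(λ) Re Tr[σ₁(λ)(Y - Y')] and E₂ = ∑_λ ξ(λ) a'(λ) Re Tr[σ₂(λ)(Y + Y')]. Then E₁² + E₂² ≤ 4. -/

import Mathlib

open Matrix ComplexOrder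

noncomputable def σx : Matrix (Fin 2) (Fin 2) ℂ := !![0, 1; 1, 0]
noncomputable def σz : Matrix (Fin 2) (Fin 2) ℂ := !![1, 0; 0, -1]


lemma herm10 (ρ : Matrix (Fin 2) (Fin 2) ℂ) (h : ρ.IsHermitian) :
    (ρ 1 0).re = (ρ 0 1).re ∧ (ρ 1 0).im = -(ρ 0 1).im := by
  have := h.apply 1 0
  constructor
  · rw [← this]; simp
  · rw [← this]; simp

lemma quad (ρ : Matrix (Fin 2) (Fin 2) ℂ) (hρ : ρ.PosSemidef) (cr ci d : ℝ) :
    0 ≤ (ρ 0 0).re * (cr^2 + ci^2) + 2*d*((ρ 0 1).re*cr + (ρ 0 1).im*ci)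
      + (ρ 1 1).re * d^2 := by
  have h2 := hρ.dotProduct_mulVec_nonneg ![(⟨cr, ci⟩ : ℂ), (d : ℝ)]
  obtain ⟨h10r, h10i⟩ := herm10 ρ hρ.1
  simp [dotProduct, mulVec, Fin.sum_univ_two, Complex.le_def, Complex.ext_iff] at h2
  rw [h10r, h10i] at h2
  nlinarith [h2.1]

lemma offdiag (ρ : Matrix (Fin 2) (Fin 2) ℂ) (hρ : ρ.PosSemidef) :
    (ρ 0 1).re^2 + (ρ 0 1).im^2 ≤ (ρ 0 0).re * (ρ 1 1).re := by
  set p := (ρ 0 0).re with hpd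
  set q := (ρ 1 1).re with hqd
  set x := (ρ 0 1).re with hxd
  set y := (ρ 0 1).im with hyd
  have hp : 0 ≤ p := by simpa using quad ρ hρ 1 0 0
  have hq : 0 ≤ q := by simpa using quad ρ hρ 0 0 1
  by_contra hc
  push_neg at hc
  set r := x^2 + y^2 with hr
  have hr0 : 0 < r := by nlinarith
  have h1 := quad ρ hρ (-x) (-y) p
  rw [← hpd, ← hqd, ← hxd, ← hyd] at h1
  have hp0 : p = 0 := by nlinarith
  set d := r/(q+1) with hdd
  have hq1 : 0 < q + 1 := by linarith
  have hd : d * (q+1) = r := div_mul_cancel₀ _ hq1.ne'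
  have hdpos : 0 < d := by positivity
  have h2 := quad ρ hρ (-x) (-y) d
  rw [← hpd, ← hqd, ← hxd, ← hyd, hp0] at h2
  nlinarith [h2, mul_pos hdpos hdpos, hd, hr0, hq]

lemma trace_bound (m s : ℝ) (ρ : Matrix (Fin 2) (Fin 2) ℂ) (hρ : ρ.PosSemidef)
    (htr : ρ.trace = 1) :
    ((ρ * ((m:ℂ) • σz + (s:ℂ) • σx)).trace.re)^2 ≤ m^2 + s^2 := by
  obtain ⟨h10r, h10i⟩ := herm10 ρ hρ.1
  have hp : 0 ≤ (ρ 0 0).re := by simpa using quad ρ hρ 1 0 0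
  have hq : 0 ≤ (ρ 1 1).re := by simpa using quad ρ hρ 0 0 1
  have hod := offdiag ρ hρ
  have hsum : (ρ 0 0).re + (ρ 1 1).re = 1 := by
    have := congrArg Complex.re htr
    simpa [Matrix.trace_fin_two] using this
  have hre : ((ρ * ((m:ℂ) • σz + (s:ℂ) • σx)).trace.re)
      = m * ((ρ 0 0).re - (ρ 1 1).re) + 2 * s * (ρ 0 1).re := by
    simp [Matrix.trace_fin_two, Matrix.mul_apply, Fin.sum_univ_two, σx, σz,
      Complex.add_re, Complex.mul_re, h10r, h10i]
    ring
  rw [hre]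
  have h1 : ((ρ 0 0).re - (ρ 1 1).re)^2 + 4*(ρ 0 1).re^2 ≤ 1 := by nlinarith
  nlinarith [sq_nonneg (m * (2*(ρ 0 1).re) - s * ((ρ 0 0).re - (ρ 1 1).re)),
    mul_le_mul_of_nonneg_left h1 (add_nonneg (sq_nonneg m) (sq_nonneg s))]

lemma avg_bound {Λ : Type*} [Fintype Λ] (ξ : Λ → ℝ) (hξ : ∀ l, 0 ≤ ξ l)
    (hξ1 : ∑ l, ξ l = 1) (a : Λ → ℝ) (ha : ∀ l, a l ∈ Set.Icc (-1 : ℝ) 1)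
    (t : Λ → ℝ) (c : ℝ) (hc : 0 ≤ c) (ht : ∀ l, |t l| ≤ c) :
    |∑ l, ξ l * a l * t l| ≤ c := by
  calc |∑ l, ξ l * a l * t l| ≤ ∑ l, |ξ l * a l * t l| := Finset.abs_sum_le_sum_abs _ _
    _ ≤ ∑ l, ξ l * c := by
        apply Finset.sum_le_sum
        intro l _
        rw [abs_mul, abs_mul, abs_of_nonneg (hξ l)]
        have h1 : |a l| ≤ 1 := abs_le.2 ⟨(ha l).1, (ha l).2⟩
        have h2 := ht l
        have h3 := abs_nonneg (t l)
        have h4 := abs_nonneg (a l)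
        rw [mul_assoc]
        exact mul_le_mul_of_nonneg_left (by nlinarith) (hξ l)
    _ = c := by rw [← Finset.sum_mul, hξ1, one_mul]

theorem stmt_8 (θ : ℝ) (hθ : θ ∈ Set.Icc 0 (Real.pi / 2))
    (Y Y' : Matrix (Fin 2) (Fin 2) ℂ)
    (hY : Y = σz) (hY' : Y' = (Real.cos θ : ℂ) • σz + (Real.sin θ : ℂ) • σx)
    {Λ : Type*} [Fintype Λ]
    (ξ : Λ → ℝ) (hξ : ∀ l, 0 ≤ ξ l) (hξ1 : ∑ l, ξ l = 1)
    (a a' : Λ → ℝ)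
    (ha : ∀ l, a l ∈ Set.Icc (-1 : ℝ) 1) (ha' : ∀ l, a' l ∈ Set.Icc (-1 : ℝ) 1)
    (σ₁ σ₂ : Λ → Matrix (Fin 2) (Fin 2) ℂ)
    (hσ₁ : ∀ l, (σ₁ l).PosSemidef) (hσ₁tr : ∀ l, (σ₁ l).trace = 1)
    (hσ₂ : ∀ l, (σ₂ l).PosSemidef) (hσ₂tr : ∀ l, (σ₂ l).trace = 1)
    (E₁ E₂ : ℝ)
    (hE₁ : E₁ = ∑ l, ξ l * a l * ((σ₁ l * (Y - Y')).trace.re))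
    (hE₂ : E₂ = ∑ l, ξ l * a' l * ((σ₂ l * (Y + Y')).trace.re)) :
    E₁ ^ 2 + E₂ ^ 2 ≤ 4 := by
  have hcos : Real.cos θ ≤ 1 := Real.cos_le_one θ
  have hcos' : -1 ≤ Real.cos θ := Real.neg_one_le_cos θ
  have hM1 : Y - Y' = ((1 - Real.cos θ : ℝ) : ℂ) • σz + ((-Real.sin θ : ℝ) : ℂ) • σx := by
    rw [hY, hY']; push_cast; module
  have hM2 : Y + Y' = ((1 + Real.cos θ : ℝ) : ℂ) • σz + ((Real.sin θ : ℝ) : ℂ) • σx := by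
    rw [hY, hY']; push_cast; module
  set c₁ := Real.sqrt (2 - 2 * Real.cos θ) with hc₁
  set c₂ := Real.sqrt (2 + 2 * Real.cos θ) with hc₂
  have hc₁0 : 0 ≤ c₁ := Real.sqrt_nonneg _
  have hc₂0 : 0 ≤ c₂ := Real.sqrt_nonneg _
  have ht1 : ∀ l, |((σ₁ l * (Y - Y')).trace.re)| ≤ c₁ := by
    intro l
    rw [hM1, ← Real.sqrt_sq_eq_abs]
    apply Real.sqrt_le_sqrt
    have := trace_bound (1 - Real.cos θ) (-Real.sin θ) (σ₁ l) (hσ₁ l) (hσ₁tr l)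
    calc ((σ₁ l * (((1 - Real.cos θ : ℝ) : ℂ) • σz + ((-Real.sin θ : ℝ) : ℂ) • σx)).trace.re)^2
        ≤ (1 - Real.cos θ)^2 + (-Real.sin θ)^2 := this
      _ = 2 - 2 * Real.cos θ := by
          have := Real.sin_sq_add_cos_sq θ; ring_nf; nlinarith
  have ht2 : ∀ l, |((σ₂ l * (Y + Y')).trace.re)| ≤ c₂ := by
    intro l
    rw [hM2, ← Real.sqrt_sq_eq_abs]
    apply Real.sqrt_le_sqrt
    have := trace_bound (1 + Real.cos θ) (Real.sin θ) (σ₂ l) (hσ₂ l) (hσ₂tr l)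
    calc ((σ₂ l * (((1 + Real.cos θ : ℝ) : ℂ) • σz + ((Real.sin θ : ℝ) : ℂ) • σx)).trace.re)^2
        ≤ (1 + Real.cos θ)^2 + (Real.sin θ)^2 := this
      _ = 2 + 2 * Real.cos θ := by
          have := Real.sin_sq_add_cos_sq θ; ring_nf; nlinarith
  have hb1 : |E₁| ≤ c₁ := hE₁ ▸ avg_bound ξ hξ hξ1 a ha _ c₁ hc₁0 ht1
  have hb2 : |E₂| ≤ c₂ := hE₂ ▸ avg_bound ξ hξ hξ1 a' ha' _ c₂ hc₂0 ht2
  have hsq1 : E₁^2 ≤ 2 - 2 * Real.cos θ := by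
    have : E₁^2 ≤ c₁^2 := by nlinarith [abs_nonneg E₁, sq_abs E₁]
    rwa [hc₁, Real.sq_sqrt (by linarith)] at this
  have hsq2 : E₂^2 ≤ 2 + 2 * Real.cos θ := by
    have : E₂^2 ≤ c₂^2 := by nlinarith [abs_nonneg E₂, sq_abs E₂]
    rwa [hc₂, Real.sq_sqrt (by linarith)] at this
  linarith
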